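/- Let a, b, c be three distinct letters and let n ≥ 4, q = ⌊√n⌋. For all t₁, t₂ ∈ ℕ with t₂ ≤ q − 1 and q + t₁·q + t₂ + 1 = n, the partial word a^{q−1} b (⋄^{q−1} c)^{t₁} ⋄^{t₂} c of length n over the alphabet {a, b, c} is unbordered. -/
import Mathlib


/-- The domain of a partial word (a list over `Option A`, where `none` is the hole):
the set of positions carrying a letter. -/
def PartialWord.domain {A : Type*} (w : List (Option A)) : Finset ℕ :=
  (Finset.range w.length).filter fun i => (w.getD i none).isSome

/-- Two partial words are compatible if they have the same length and agree on the
intersection of their domains. -/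
def PartialWord.Compatible {A : Type*} (w v : List (Option A)) : Prop :=
  w.length = v.length ∧
    ∀ i ∈ PartialWord.domain w ∩ PartialWord.domain v, w.getD i none = v.getD i none

/-- A partial word is unbordered if no nonempty proper prefix is compatible with a
suffix of the same length. -/
def PartialWord.Unbordered {A : Type*} (w : List (Option A)) : Prop :=
  ∀ x y : List (Option A), x <+: w → y <:+ w → x ≠ [] → x.length < w.length →
    x.length = y.length → ¬ PartialWord.Compatible x y

/-- The number of holes of a partial word. -/
def PartialWord.holes {A : Type*} (w : List (Option A)) : ℕ :=
  w.countP fun x => x.isNone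

/-- `u` repeated `t` times. -/
def listPow {α : Type*} (u : List α) (t : ℕ) : List α := (List.replicate t u).flatten

/-- A complete sparse ruler of length `n`. -/
def IsCompleteRuler (n : ℕ) (R : Finset ℕ) : Prop :=
  (∀ x ∈ R, x ≤ n) ∧ 0 ∈ R ∧ n ∈ R ∧ ∀ d ≤ n, ∃ r ∈ R, ∃ s ∈ R, r = s + d

/-- Minimum number of marks of a complete sparse ruler of length `n`. -/
noncomputable def M1 (n : ℕ) : ℕ :=
  sInf {k | ∃ R : Finset ℕ, IsCompleteRuler n R ∧ R.card = k}

/-- Maximum number of holes an unbordered partial word of length `n` over an alphabet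
of size `k` can have. -/
noncomputable def HB (k n : ℕ) : ℕ :=
  sSup {h | ∃ w : List (Option (Fin k)),
    w.length = n ∧ PartialWord.Unbordered w ∧ PartialWord.holes w = h}

/-- The ruler (set of partial sums) given by a difference representation. -/
def rulerOfDiffs (D : List ℕ) : Finset ℕ :=
  ((List.range (D.length + 1)).map fun t => (D.take t).sum).toFinset

/-- The difference representation of the extended Wichmann ruler `w₁(r,s,i,j)`. -/
def wichmannDiffs (r s i j : ℕ) : List ℕ :=
  List.replicate r 1 ++ [r + 1] ++ List.replicate r (2 * r + 1) ++
    List.replicate s (4 * r + 3) ++ List.replicate (r + 1) (2 * r + 2) ++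
    List.replicate r 1 ++ List.replicate i (r + 1) ++ [j]

/-- A complete two-dimensional sparse ruler: an `(n,m)`-ruler. -/
def IsRuler2 (n m : ℕ) (R : Finset (ℕ × ℕ)) : Prop :=
  (∀ p ∈ R, p.1 < n ∧ p.2 < m) ∧
    ∀ x y : ℤ, |x| ≤ (n : ℤ) - 1 → |y| ≤ (m : ℤ) - 1 →
      ∃ p ∈ R, ∃ q ∈ R, (p.1 : ℤ) - (q.1 : ℤ) = x ∧ (p.2 : ℤ) - (q.2 : ℤ) = y

/-- Minimum number of marks of an `(n,m)`-ruler. -/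
noncomputable def M2 (n m : ℕ) : ℕ :=
  sInf {k | ∃ R : Finset (ℕ × ℕ), IsRuler2 n m R ∧ R.card = k}

/-- The domain of an `n` by `m` two-dimensional partial word. -/
def domain2 {A : Type*} (n m : ℕ) (w : ℕ × ℕ → Option A) : Finset (ℕ × ℕ) :=
  (Finset.range n ×ˢ Finset.range m).filter fun p => (w p).isSome

/-- An `n` by `m` two-dimensional partial word is unbordered if its domain is an
`(n,m)`-ruler and every nonzero measurable vector can be measured between two
positions carrying distinct letters. -/
def Unbordered2 {A : Type*} (n m : ℕ) (w : ℕ × ℕ → Option A) : Prop :=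
  IsRuler2 n m (domain2 n m w) ∧
    ∀ x y : ℤ, |x| ≤ (n : ℤ) - 1 → |y| ≤ (m : ℤ) - 1 → ¬(x = 0 ∧ y = 0) →
      ∃ p ∈ domain2 n m w, ∃ q ∈ domain2 n m w,
        (p.1 : ℤ) - (q.1 : ℤ) = x ∧ (p.2 : ℤ) - (q.2 : ℤ) = y ∧ w p ≠ w q

/-- Number of holes of an `n` by `m` two-dimensional partial word. -/
def holes2 {A : Type*} (n m : ℕ) (w : ℕ × ℕ → Option A) : ℕ :=
  n * m - (domain2 n m w).card

/-- Maximum number of holes an unbordered `n` by `m` two-dimensional partial word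
over an alphabet of size `k` can have. -/
noncomputable def HB2 (k n m : ℕ) : ℕ :=
  sSup {h | ∃ w : ℕ × ℕ → Option (Fin k), Unbordered2 n m w ∧ holes2 n m w = h}
lemma listPow_length {α} (u : List α) (t : ℕ) : (listPow u t).length = t * u.length := by
  induction t with
  | zero => simp [listPow]
  | succ t ih =>
    simp only [listPow, List.replicate_succ, List.flatten_cons, List.length_append]
    rw [show (List.replicate t u).flatten = listPow u t from rfl, ih]; ring

lemma listPow_getD {α} (u : List α) (d : α) (t k r : ℕ) (hk : k < t) (hr : r < u.length) :
    (listPow u t).getD (k * u.length + r) d = u.getD r d := by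
  induction t generalizing k with
  | zero => omega
  | succ t ih =>
    have hflat : listPow u (t+1) = u ++ listPow u t := by
      simp [listPow, List.replicate_succ]
    rw [hflat]
    rcases Nat.eq_zero_or_pos k with hk0 | hk0
    · subst hk0; simpa using List.getD_append u _ d r hr
    · have : k * u.length + r = u.length + ((k-1) * u.length + r) := by
        cases k with
        | zero => omega
        | succ k' => simp [Nat.succ_mul]; ring_nf
      rw [this, List.getD_append_right u _ d _ (by omega), Nat.add_sub_cancel_left]
      exact ih (k-1) (by omega)

lemma sqrtWord_aux {A : Type*} (a b c : A) (hab : a ≠ b) (hac : a ≠ c)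
    (hbc : b ≠ c) (q t₁ t₂ n : ℕ) (hq : 2 ≤ q) (ht₂ : t₂ + 1 ≤ q)
    (hlen : q + t₁ * q + t₂ + 1 = n) :
    PartialWord.Unbordered
      ((List.replicate (q - 1) (some a) ++ [some b] ++
        listPow (List.replicate (q - 1) none ++ [some c]) t₁ ++
        List.replicate t₂ none ++ [some c] : List (Option A))) := by
  set u : List (Option A) := List.replicate (q - 1) none ++ [some c] with hu
  set W : List (Option A) := List.replicate (q - 1) (some a) ++ [some b] ++
      listPow u t₁ ++ List.replicate t₂ none ++ [some c] with hW
  have hu_len : u.length = q := by simp [hu]; omega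
  have hB_len : (listPow u t₁).length = t₁ * q := by rw [listPow_length, hu_len]
  have hW_len : W.length = n := by
    simp only [hW, List.length_append, List.length_replicate, List.length_singleton, hB_len]
    omega
  -- getD facts
  have hWa : ∀ i, i < q - 1 → W.getD i none = some a := by
    intro i hi
    rw [hW, List.getD_append _ _ _ _ (by simp only [List.length_append, List.length_replicate, List.length_singleton, hB_len]; omega),
        List.getD_append _ _ _ _ (by simp only [List.length_append, List.length_replicate, List.length_singleton, hB_len]; omega),
        List.getD_append _ _ _ _ (by simp only [List.length_append, List.length_replicate, List.length_singleton]; omega),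
        List.getD_append _ _ _ _ (by simp only [List.length_replicate]; omega)]
    rw [List.getD_eq_getElem _ _ (by simp; omega)]
    simp
  have hWb : W.getD (q - 1) none = some b := by
    rw [hW, List.getD_append _ _ _ _ (by simp only [List.length_append, List.length_replicate, List.length_singleton, hB_len]; omega),
        List.getD_append _ _ _ _ (by simp only [List.length_append, List.length_replicate, List.length_singleton, hB_len]; omega),
        List.getD_append _ _ _ _ (by simp only [List.length_append, List.length_replicate, List.length_singleton]; omega),
        List.getD_append_right _ _ _ _ (by simp only [List.length_replicate]; omega)]
    simp
  have hWc1 : ∀ m, 2 ≤ m → m ≤ t₁ + 1 → W.getD (m * q - 1) none = some c := by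
    intro m hm2 hm1
    have hmul : (m - 2) * q + 2 * q = m * q := by
      have h2m : m - 2 + 2 = m := by omega
      calc (m - 2) * q + 2 * q = (m - 2 + 2) * q := by ring
        _ = m * q := by rw [h2m]
    have hmul2 : m * q ≤ t₁ * q + q := by
      have := Nat.mul_le_mul_right q hm1
      calc m * q ≤ (t₁ + 1) * q := this
        _ = t₁ * q + q := by ring
    rw [hW, List.getD_append _ _ _ _ (by simp only [List.length_append, List.length_replicate, List.length_singleton, hB_len]; omega),
        List.getD_append _ _ _ _ (by simp only [List.length_append, List.length_replicate, List.length_singleton, hB_len]; omega),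
        List.getD_append_right _ _ _ _ (by simp only [List.length_append, List.length_replicate, List.length_singleton]; omega)]
    have hidx : m * q - 1 - (List.replicate (q - 1) (some a) ++ [some b]).length
        = (m - 2) * u.length + (q - 1) := by
      simp [hu_len]; omega
    rw [hidx, listPow_getD _ _ _ _ _ (by omega) (by rw [hu_len]; omega)]
    rw [hu, List.getD_append_right _ _ _ _ (by simp)]
    simp
  have hWcn : W.getD (n - 1) none = some c := by
    rw [hW, List.getD_append_right _ _ _ _ (by simp only [List.length_append, List.length_replicate, List.length_singleton, hB_len]; omega)]
    have : n - 1 - (List.replicate (q - 1) (some a) ++ [some b] ++ listPow u t₁ ++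
        List.replicate t₂ none).length = 0 := by simp [hB_len]; omega
    rw [this]; simp
  -- main argument
  intro x y hpre hsuf hne hlt hxy hcompat
  obtain ⟨hlen2, hagree⟩ := hcompat
  set ℓ := x.length with hℓ
  have h1ℓ : 1 ≤ ℓ := List.length_pos_iff.mpr hne
  have hℓn : ℓ < n := by rw [← hW_len]; exact hlt
  obtain ⟨r, hr⟩ := hpre
  obtain ⟨t, ht⟩ := hsuf
  have hts : t.length = n - ℓ := by
    have := congrArg List.length ht
    simp only [List.length_append] at this
    omega
  have hx_eq : ∀ i, i < ℓ → x.getD i none = W.getD i none := by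
    intro i hi
    rw [← hr, List.getD_append _ _ _ _ hi]
  have hy_eq : ∀ i, i < ℓ → y.getD i none = W.getD (n - ℓ + i) none := by
    intro i hi
    rw [← ht, show n - ℓ + i = t.length + i by omega,
        List.getD_append_right _ _ _ _ (by omega), Nat.add_sub_cancel_left]
  have key : ∀ i, i < ℓ → (W.getD i none).isSome → (W.getD (n - ℓ + i) none).isSome →
      W.getD i none = W.getD (n - ℓ + i) none := by
    intro i hi h1 h2
    have hmem : i ∈ PartialWord.domain x ∩ PartialWord.domain y := by
      simp only [PartialWord.domain, Finset.mem_inter, Finset.mem_filter, Finset.mem_range]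
      exact ⟨⟨hi, by rw [hx_eq i hi]; exact h1⟩, ⟨by omega, by rw [hy_eq i hi]; exact h2⟩⟩
    have := hagree i hmem
    rwa [hx_eq i hi, hy_eq i hi] at this
  by_cases hcase : ℓ ≤ q
  · have e2 : n - ℓ + (ℓ - 1) = n - 1 := by omega
    rcases Nat.lt_or_ge (ℓ - 1) (q - 1) with h | h
    · have := key (ℓ - 1) (by omega) (by rw [hWa _ h]; simp) (by rw [e2, hWcn]; simp)
      rw [hWa _ h, e2, hWcn] at this
      exact hac (Option.some.inj this)
    · have heq : ℓ - 1 = q - 1 := by omega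
      have := key (ℓ - 1) (by omega) (by rw [heq, hWb]; simp) (by rw [e2, hWcn]; simp)
      rw [e2, hWcn, heq, hWb] at this
      exact hbc (Option.some.inj this)
  · push_neg at hcase
    by_cases hsq : n - ℓ < q
    · have hi : q - 1 - (n - ℓ) < q - 1 := by omega
      have e2 : n - ℓ + (q - 1 - (n - ℓ)) = q - 1 := by omega
      have := key (q - 1 - (n - ℓ)) (by omega) (by rw [hWa _ hi]; simp) (by rw [e2, hWb]; simp)
      rw [hWa _ hi, e2, hWb] at this
      exact hab (Option.some.inj this)
    · push_neg at hsq
      set m := (n - ℓ) / q + 1 with hm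
      have hd1 : q * ((n - ℓ) / q) + (n - ℓ) % q = n - ℓ := Nat.div_add_mod _ _
      have hd2 : (n - ℓ) % q < q := Nat.mod_lt _ (by omega)
      have hmq : m * q = q * ((n - ℓ) / q) + q := by rw [hm]; ring
      have hm1 : n - ℓ + 1 ≤ m * q := by omega
      have hm2 : m * q ≤ (n - ℓ) + q := by omega
      have hm3 : 2 ≤ m := by
        have : 1 ≤ (n - ℓ) / q := (Nat.one_le_div_iff (by omega)).mpr hsq
        omega
      have hm4 : m ≤ t₁ + 1 := by
        have hlt2 : m * q < (t₁ + 2) * q := by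
          have h5 : (t₁ + 2) * q = t₁ * q + 2 * q := by ring
          omega
        have := Nat.lt_of_mul_lt_mul_right hlt2
        omega
      have e2 : n - ℓ + (m * q - 1 - (n - ℓ)) = m * q - 1 := by omega
      have hi_le : m * q - 1 - (n - ℓ) ≤ q - 1 := by omega
      rcases Nat.lt_or_ge (m * q - 1 - (n - ℓ)) (q - 1) with h | h
      · have := key (m * q - 1 - (n - ℓ)) (by omega) (by rw [hWa _ h]; simp)
          (by rw [e2, hWc1 m hm3 hm4]; simp)
        rw [hWa _ h, e2, hWc1 m hm3 hm4] at this
        exact hac (Option.some.inj this)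
      · have heq : m * q - 1 - (n - ℓ) = q - 1 := by omega
        have := key (m * q - 1 - (n - ℓ)) (by omega) (by rw [heq, hWb]; simp)
          (by rw [e2, hWc1 m hm3 hm4]; simp)
        rw [e2, hWc1 m hm3 hm4, heq, hWb] at this
        exact hbc (Option.some.inj this)

/-- For three distinct letters `a, b, c`, `n ≥ 4`, `q = ⌊√n⌋`, and all
`t₁, t₂ ∈ ℕ` with `t₂ ≤ q - 1` and `q + t₁·q + t₂ + 1 = n`, the partial word
`a^{q-1} b (⋄^{q-1} c)^{t₁} ⋄^{t₂} c` of length `n` over the alphabet `{a,b,c}` is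
unbordered. -/
theorem sqrtWord_unbordered {A : Type*} (a b c : A) (hab : a ≠ b) (hac : a ≠ c)
    (hbc : b ≠ c) (n : ℕ) (hn : 4 ≤ n) (t₁ t₂ : ℕ) (ht₂ : t₂ ≤ Nat.sqrt n - 1)
    (hlen : Nat.sqrt n + t₁ * Nat.sqrt n + t₂ + 1 = n) :
    PartialWord.Unbordered
      ((List.replicate (Nat.sqrt n - 1) (some a) ++ [some b] ++
        listPow (List.replicate (Nat.sqrt n - 1) none ++ [some c]) t₁ ++
        List.replicate t₂ none ++ [some c] : List (Option A))) := by
  have hq : 2 ≤ Nat.sqrt n := Nat.le_sqrt.mpr (by omega)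
  exact sqrtWord_aux a b c hab hac hbc (Nat.sqrt n) t₁ t₂ n hq (by omega) hlen
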